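/- Let n = n1 + n2 with n1, n2 ≥ 1, let G be the complete split graph with clique V1, independent set V2 and edge set E, and let P be the corresponding polytope of Theorem 3. Let x ∈ [0,1]^n with x_{n1+1} ≥ x_{n1+2} ≥ … ≥ x_n, let X_i ⊆ [0,1) be Lebesgue-measurable with μ(X_i) = x_i for all i ∈ {1,…,n} with X_j = [0, x_j) for j ∈ V2, let S ⊆ V2 with |S| ≤ n1 − 1, and let α be an integer with 0 ≤ α ≤ n1 − 1 such that: (a) μ(X_i ∩ X_j) = max{0, x_i + x_j − 1} for all i ∈ V1 and j ∈ V2 ∖ S; and (b) for every t ∈ [0,1), the number of indices i ∈ V1 ∪ S with t ∈ X_i is either α or α + 1. Then for every y with (x,y) ∈ P, ∑_{{i,j}∈E} y_{ij} ≥ ∑_{{i,j}∈E} μ(X_i ∩ X_j). -/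

import Mathlib

open Finset

/-- Membership in the polytope `P` of Theorem 3 for the complete split graph with clique
`V1 = {1,…,n1}` and independent set `V2 = {n1+1,…,n1+n2}`: McCormick bounds
`0 ≤ y_{ij} ≤ min{x_i,x_j}` for all pairs, lower bounds `y_{ij} ≥ x_i + x_j - 1` for
`i ∈ V1`, `j ∈ V2`, and the clique inequalities
`y(E*(V1 ∪ S)) ≥ α x(V1 ∪ S) - α(α+1)/2` for `S ⊆ V2`, `|S| ≤ n1 - 1`, `1 ≤ α ≤ n1 - 1`. -/
def memPSplit (n1 n2 : ℕ) (x : ℕ → ℝ) (y : ℕ → ℕ → ℝ) : Prop :=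
  (∀ i ∈ Finset.Icc 1 (n1 + n2), 0 ≤ x i ∧ x i ≤ 1) ∧
  (∀ i ∈ Finset.Icc 1 (n1 + n2), ∀ j ∈ Finset.Icc 1 (n1 + n2), i < j →
      0 ≤ y i j ∧ y i j ≤ min (x i) (x j)) ∧
  (∀ i ∈ Finset.Icc 1 n1, ∀ j ∈ Finset.Icc (n1 + 1) (n1 + n2),
      x i + x j - 1 ≤ y i j) ∧
  (∀ S ⊆ Finset.Icc (n1 + 1) (n1 + n2), S.card ≤ n1 - 1 →
    ∀ α : ℕ, 1 ≤ α → α ≤ n1 - 1 →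
      (α : ℝ) * (∑ i ∈ Finset.Icc 1 n1 ∪ S, x i) - (α : ℝ) * ((α : ℝ) + 1) / 2 ≤
        ∑ i ∈ Finset.Icc 1 n1 ∪ S,
          ∑ j ∈ (Finset.Icc 1 n1 ∪ S).filter (fun j => i < j), y i j)

/-- The sum of the `y`-variables over all edges of the complete split graph. -/
noncomputable def edgeSumSplit (n1 n2 : ℕ) (y : ℕ → ℕ → ℝ) : ℝ :=
  ∑ i ∈ Finset.Icc 1 n1, ∑ j ∈ Finset.Icc (i + 1) (n1 + n2), y i j

/-- The quadratic function `f(x) = ∑_{ij ∈ E} x_i x_j` for the complete split graph. -/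
noncomputable def fSplit (n1 n2 : ℕ) (x : ℕ → ℝ) : ℝ :=
  ∑ i ∈ Finset.Icc 1 n1, ∑ j ∈ Finset.Icc (i + 1) (n1 + n2), x i * x j

open MeasureTheory

lemma pairs_card (F : Finset ℕ) :
    ∑ i ∈ F, (F.filter (fun j => i < j)).card = F.card.choose 2 := by
  induction F using Finset.strongInduction with
  | _ F ih =>
    rcases F.eq_empty_or_nonempty with rfl | hne
    · simp
    · set m := F.min' hne with hmdef
      have hm : m ∈ F := F.min'_mem hne
      have h1 : F.filter (fun j => m < j) = F.erase m := by
        ext j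
        simp only [mem_filter, mem_erase]
        constructor
        · rintro ⟨hj, hlt⟩; exact ⟨Nat.ne_of_gt hlt, hj⟩
        · rintro ⟨hne', hj⟩; exact ⟨hj, lt_of_le_of_ne (F.min'_le j hj) (Ne.symm hne')⟩
      have h2 : ∀ i ∈ F.erase m, F.filter (fun j => i < j) = (F.erase m).filter (fun j => i < j) := by
        intro i hi
        rw [Finset.filter_erase]
        rw [Finset.erase_eq_of_notMem]
        simp only [mem_filter]
        rintro ⟨-, hlt⟩
        exact absurd (F.min'_le i (Finset.mem_of_mem_erase hi)) (not_le.mpr hlt)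
      rw [← Finset.add_sum_erase _ _ hm, h1, Finset.sum_congr rfl (fun i hi => by rw [h2 i hi]),
        ih (F.erase m) (Finset.erase_ssubset hm)]
      have hc : F.card = (F.erase m).card + 1 := by
        have := Finset.card_pos.mpr hne
        rw [Finset.card_erase_of_mem hm]
        omega
      rw [hc]
      rw [Nat.choose_succ_succ, Nat.choose_one_right]

lemma two_mul_choose_two (n : ℕ) : 2 * n.choose 2 = n * (n - 1) := by
  induction n with
  | zero => rfl
  | succ n ih =>
    cases n with
    | zero => rfl
    | succ m =>
      have : (m + 2).choose 2 = (m + 1).choose 1 + (m + 1).choose 2 :=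
        Nat.choose_succ_succ _ _
      rw [this, Nat.choose_one_right, Nat.mul_add, ih]
      simp only [Nat.add_sub_cancel]
      ring

lemma chooseA (n : ℕ) : n.choose 2 + (n + 1).choose 2 = n * n := by
  have h2 := two_mul_choose_two n
  have h3 := two_mul_choose_two (n + 1)
  cases n with
  | zero => rfl
  | succ m =>
    simp only [Nat.add_sub_cancel] at h2 h3
    refine Nat.eq_of_mul_eq_mul_left (by norm_num : 0 < 2) ?_
    rw [Nat.mul_add, h2, h3]
    ring

lemma chooseB (n : ℕ) : (n + 1).choose 2 + (n + 1).choose 2 = n * (n + 1) := by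
  have h3 := two_mul_choose_two (n + 1)
  simp only [Nat.add_sub_cancel] at h3
  refine Nat.eq_of_mul_eq_mul_left (by norm_num : 0 < 2) ?_
  rw [Nat.mul_add, h3]
  ring

open Classical in
lemma pointwise_pairs (W : Finset ℕ) (X : ℕ → Set ℝ) (t : ℝ) :
    ∑ i ∈ W, ∑ j ∈ W.filter (fun j => i < j), (if t ∈ X i ∩ X j then (1:ℕ) else 0)
      = ((W.filter (fun i => t ∈ X i)).card).choose 2 := by
  classical
  rw [← pairs_card, Finset.sum_filter]
  refine Finset.sum_congr rfl ?_
  intro i hi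
  by_cases h : t ∈ X i
  · simp only [h, if_true]
    rw [Finset.filter_comm, Finset.card_filter]
    refine Finset.sum_congr rfl ?_
    intro j hj
    simp [Set.mem_inter_iff, h]
  · simp [Set.mem_inter_iff, h]

open MeasureTheory ENNReal in
open Classical in
lemma key_identity (W : Finset ℕ) (X : ℕ → Set ℝ)
    (hmeas : ∀ i ∈ W, MeasurableSet (X i))
    (hsub : ∀ i ∈ W, X i ⊆ Set.Ico 0 1) (α : ℕ)
    (hb : ∀ t ∈ Set.Ico (0:ℝ) 1,
      ((W.filter (fun i => t ∈ X i)).card = α ∨ (W.filter (fun i => t ∈ X i)).card = α + 1)) :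
    ∑ i ∈ W, ∑ j ∈ W.filter (fun j => i < j), (volume (X i ∩ X j)).toReal
      = (α : ℝ) * (∑ i ∈ W, (volume (X i)).toReal) - (α : ℝ) * ((α : ℝ) + 1) / 2 := by
  set I : Set ℝ := Set.Ico 0 1 with hIdef
  have hI : MeasurableSet I := measurableSet_Ico
  have hvolI : volume I = 1 := by
    rw [hIdef, Real.volume_Ico]
    norm_num
  set Nf : ℝ → ℕ := fun t => (W.filter (fun i => t ∈ X i)).card with hNf
  -- pointwise identities
  have hpt1 : ∀ t, ∑ i ∈ W, (X i).indicator (1 : ℝ → ℝ≥0∞) t = ((Nf t : ℕ) : ℝ≥0∞) := by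
    intro t
    rw [hNf]
    simp only [Finset.card_filter]
    push_cast
    refine Finset.sum_congr rfl fun i _ => ?_
    simp [Set.indicator_apply]
  have hpt2 : ∀ t, ∑ i ∈ W, ∑ j ∈ W.filter (fun j => i < j),
      (X i ∩ X j).indicator (1 : ℝ → ℝ≥0∞) t = (((Nf t).choose 2 : ℕ) : ℝ≥0∞) := by
    intro t
    rw [hNf, ← pointwise_pairs W X t]
    push_cast
    refine Finset.sum_congr rfl fun i _ => Finset.sum_congr rfl fun j _ => ?_
    simp [Set.indicator_apply]
  have hmeasNf : Measurable (fun t => ((Nf t : ℕ) : ℝ≥0∞)) := by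
    have : (fun t => ((Nf t : ℕ) : ℝ≥0∞)) = fun t => ∑ i ∈ W, (X i).indicator 1 t := by
      funext t; rw [hpt1]
    rw [this]
    exact Finset.measurable_sum _ fun i hi => (measurable_one.indicator (hmeas i hi))
  -- E2
  have E2 : ∑ i ∈ W, volume (X i) = ∫⁻ t in I, ((Nf t : ℕ) : ℝ≥0∞) := by
    have : ∀ i ∈ W, volume (X i) = ∫⁻ t in I, (X i).indicator 1 t := by
      intro i hi
      rw [lintegral_indicator_one (hmeas i hi), Measure.restrict_apply (hmeas i hi),
        Set.inter_eq_left.mpr (hsub i hi)]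
    rw [Finset.sum_congr rfl this,
      ← lintegral_finset_sum _ fun i hi => (measurable_one.indicator (hmeas i hi))]
    exact lintegral_congr fun t => hpt1 t
  -- E1
  have E1 : ∑ i ∈ W, ∑ j ∈ W.filter (fun j => i < j), volume (X i ∩ X j)
      = ∫⁻ t in I, (((Nf t).choose 2 : ℕ) : ℝ≥0∞) := by
    have h1 : ∀ i ∈ W, ∀ j ∈ W.filter (fun j => i < j),
        volume (X i ∩ X j) = ∫⁻ t in I, (X i ∩ X j).indicator 1 t := by
      intro i hi j hj
      have hj' : j ∈ W := (Finset.mem_filter.mp hj).1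
      have hm : MeasurableSet (X i ∩ X j) := (hmeas i hi).inter (hmeas j hj')
      rw [lintegral_indicator_one hm, Measure.restrict_apply hm,
        Set.inter_eq_left.mpr ((Set.inter_subset_left).trans (hsub i hi))]
    rw [Finset.sum_congr rfl (fun i hi => Finset.sum_congr rfl (h1 i hi))]
    rw [Finset.sum_congr rfl (fun i hi => (lintegral_finset_sum _
      (fun j hj => measurable_one.indicator
        ((hmeas i hi).inter (hmeas j (Finset.mem_filter.mp hj).1)))).symm)]
    rw [← lintegral_finset_sum _ (fun i hi => Finset.measurable_sum _
      (fun j hj => measurable_one.indicator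
        ((hmeas i hi).inter (hmeas j (Finset.mem_filter.mp hj).1))))]
    exact lintegral_congr fun t => hpt2 t
  set C : ℝ≥0∞ := (((α+1).choose 2 : ℕ) : ℝ≥0∞) with hC
  -- main ENNReal equation
  have hmeasChoose : Measurable (fun t => (((Nf t).choose 2 : ℕ) : ℝ≥0∞)) := by
    have : (fun t => (((Nf t).choose 2 : ℕ) : ℝ≥0∞))
        = fun t => ∑ i ∈ W, ∑ j ∈ W.filter (fun j => i < j), (X i ∩ X j).indicator 1 t := by
      funext t; rw [hpt2]
    rw [this]
    exact Finset.measurable_sum _ fun i hi => Finset.measurable_sum _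
      fun j hj => measurable_one.indicator
        ((hmeas i hi).inter (hmeas j (Finset.mem_filter.mp hj).1))
  have Emain : (∑ i ∈ W, ∑ j ∈ W.filter (fun j => i < j), volume (X i ∩ X j)) + C
      = (α : ℝ≥0∞) * ∑ i ∈ W, volume (X i) := by
    rw [E1, E2]
    calc (∫⁻ t in I, (((Nf t).choose 2 : ℕ) : ℝ≥0∞)) + C
        = ∫⁻ t in I, ((((Nf t).choose 2 : ℕ) : ℝ≥0∞) + C) := by
          rw [lintegral_add_right _ measurable_const, setLIntegral_const, hvolI, mul_one]
      _ = ∫⁻ t in I, (α : ℝ≥0∞) * ((Nf t : ℕ) : ℝ≥0∞) := by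
          refine setLIntegral_congr_fun hI (fun t ht => ?_)
          rcases hb t ht with h | h
          · rw [show Nf t = α from h, hC, ← Nat.cast_add, ← Nat.cast_mul, chooseA]
          · rw [show Nf t = α + 1 from h, hC, ← Nat.cast_add, ← Nat.cast_mul, chooseB]
      _ = (α : ℝ≥0∞) * ∫⁻ t in I, ((Nf t : ℕ) : ℝ≥0∞) := lintegral_const_mul _ hmeasNf
  -- finiteness
  have hfin1 : ∀ i ∈ W, volume (X i) ≠ ⊤ := by
    intro i hi
    exact ne_top_of_le_ne_top (by rw [hvolI]; exact one_ne_top) (measure_mono (hsub i hi))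
  have hVfin : (∑ i ∈ W, volume (X i)) ≠ ⊤ := by
    rw [← lt_top_iff_ne_top]
    exact ENNReal.sum_lt_top.mpr fun i hi => lt_top_iff_ne_top.mpr (hfin1 i hi)
  have hfin2 : ∀ i ∈ W, ∀ j ∈ W.filter (fun j => i < j), volume (X i ∩ X j) ≠ ⊤ :=
    fun i hi j hj => ne_top_of_le_ne_top (hfin1 i hi) (measure_mono Set.inter_subset_left)
  have hPfin : (∑ i ∈ W, ∑ j ∈ W.filter (fun j => i < j), volume (X i ∩ X j)) ≠ ⊤ := by
    rw [← lt_top_iff_ne_top]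
    refine ENNReal.sum_lt_top.mpr fun i hi => ENNReal.sum_lt_top.mpr fun j hj =>
      lt_top_iff_ne_top.mpr (hfin2 i hi j hj)
  -- pass to reals
  have hR := congrArg ENNReal.toReal Emain
  rw [ENNReal.toReal_add hPfin (by simp [hC]), ENNReal.toReal_mul] at hR
  rw [ENNReal.toReal_sum (fun i hi => by
        rw [← lt_top_iff_ne_top]
        exact ENNReal.sum_lt_top.mpr fun j hj => lt_top_iff_ne_top.mpr (hfin2 i hi j hj)),
     Finset.sum_congr rfl (fun i hi => ENNReal.toReal_sum (hfin2 i hi)),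
     ENNReal.toReal_sum hfin1] at hR
  simp only [ENNReal.toReal_natCast, hC] at hR
  have hCval : (((α+1).choose 2 : ℕ) : ℝ) = (α : ℝ) * ((α : ℝ) + 1) / 2 := by
    have := two_mul_choose_two (α + 1)
    simp only [Nat.add_sub_cancel] at this
    have := congrArg (fun n : ℕ => (n : ℝ)) this
    push_cast at this
    linarith
  rw [hCval] at hR
  linarith

open Classical in
lemma decompW (n1 n2 : ℕ) (S : Finset ℕ) (hS : S ⊆ Finset.Icc (n1+1) (n1+n2))
    (f : ℕ → ℕ → ℝ) :
    ∑ i ∈ Finset.Icc 1 n1 ∪ S, ∑ j ∈ (Finset.Icc 1 n1 ∪ S).filter (fun j => i < j), f i j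
      = (∑ i ∈ Finset.Icc 1 n1, ∑ j ∈ Finset.Icc (i+1) n1, f i j)
        + (∑ i ∈ Finset.Icc 1 n1, ∑ j ∈ S, f i j)
        + ∑ i ∈ S, ∑ j ∈ S.filter (fun j => i < j), f i j := by
  have hSbig : ∀ s ∈ S, n1 + 1 ≤ s := fun s hs => (Finset.mem_Icc.mp (hS hs)).1
  have hdisj : Disjoint (Finset.Icc 1 n1) S := by
    rw [Finset.disjoint_left]
    intro a ha haS
    have := (Finset.mem_Icc.mp ha).2
    have := hSbig a haS
    omega
  rw [Finset.sum_union hdisj]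
  have hV1 : ∀ i ∈ Finset.Icc 1 n1,
      ∑ j ∈ (Finset.Icc 1 n1 ∪ S).filter (fun j => i < j), f i j
        = ∑ j ∈ Finset.Icc (i+1) n1, f i j + ∑ j ∈ S, f i j := by
    intro i hi
    have hi' := Finset.mem_Icc.mp hi
    rw [Finset.filter_union]
    have e1 : (Finset.Icc 1 n1).filter (fun j => i < j) = Finset.Icc (i+1) n1 := by
      ext j
      simp only [Finset.mem_filter, Finset.mem_Icc]
      omega
    have e2 : S.filter (fun j => i < j) = S := by
      refine Finset.filter_true_of_mem fun j hj => ?_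
      have := hSbig j hj
      omega
    have hsub' : Finset.Icc (i+1) n1 ⊆ Finset.Icc 1 n1 := by
      intro a ha
      have := Finset.mem_Icc.mp ha
      rw [Finset.mem_Icc]
      omega
    rw [e1, e2, Finset.sum_union (hdisj.mono hsub' le_rfl)]
  have hSpart : ∀ i ∈ S,
      ∑ j ∈ (Finset.Icc 1 n1 ∪ S).filter (fun j => i < j), f i j
        = ∑ j ∈ S.filter (fun j => i < j), f i j := by
    intro i hi
    rw [Finset.filter_union]
    have e1 : (Finset.Icc 1 n1).filter (fun j => i < j) = ∅ := by
      refine Finset.filter_false_of_mem fun j hj => ?_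
      have := (Finset.mem_Icc.mp hj).2
      have := hSbig i hi
      omega
    rw [e1, Finset.empty_union]
  rw [Finset.sum_congr rfl hV1, Finset.sum_congr rfl hSpart, Finset.sum_add_distrib]

lemma decompE (n1 n2 : ℕ) (S : Finset ℕ) (hS : S ⊆ Finset.Icc (n1+1) (n1+n2))
    (f : ℕ → ℕ → ℝ) :
    ∑ i ∈ Finset.Icc 1 n1, ∑ j ∈ Finset.Icc (i+1) (n1+n2), f i j
      = (∑ i ∈ Finset.Icc 1 n1, ∑ j ∈ Finset.Icc (i+1) n1, f i j)
        + (∑ i ∈ Finset.Icc 1 n1, ∑ j ∈ S, f i j)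
        + ∑ i ∈ Finset.Icc 1 n1, ∑ j ∈ Finset.Icc (n1+1) (n1+n2) \ S, f i j := by
  have h : ∀ i ∈ Finset.Icc 1 n1,
      ∑ j ∈ Finset.Icc (i+1) (n1+n2), f i j
        = ∑ j ∈ Finset.Icc (i+1) n1, f i j + (∑ j ∈ S, f i j
          + ∑ j ∈ Finset.Icc (n1+1) (n1+n2) \ S, f i j) := by
    intro i hi
    have hi' := Finset.mem_Icc.mp hi
    have e1 : Finset.Icc (i+1) (n1+n2) = Finset.Icc (i+1) n1 ∪ Finset.Icc (n1+1) (n1+n2) := by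
      ext j
      simp only [Finset.mem_union, Finset.mem_Icc]
      omega
    have hd : Disjoint (Finset.Icc (i+1) n1) (Finset.Icc (n1+1) (n1+n2)) := by
      rw [Finset.disjoint_left]
      intro a ha ha'
      have := (Finset.mem_Icc.mp ha).2
      have := (Finset.mem_Icc.mp ha').1
      omega
    rw [e1, Finset.sum_union hd, ← Finset.sum_sdiff hS, add_comm (∑ j ∈ _ \ S, f i j)]
  rw [Finset.sum_congr rfl h, Finset.sum_add_distrib, Finset.sum_add_distrib, ← add_assoc]


open Classical in
theorem split_graph_lower_bound (n1 n2 : ℕ) (h1 : 1 ≤ n1) (h2 : 1 ≤ n2)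
    (x : ℕ → ℝ)
    (hx : ∀ i ∈ Finset.Icc 1 (n1 + n2), 0 ≤ x i ∧ x i ≤ 1)
    (hmono2 : ∀ i ∈ Finset.Icc (n1 + 1) (n1 + n2), ∀ j ∈ Finset.Icc (n1 + 1) (n1 + n2),
      i ≤ j → x j ≤ x i)
    (X : ℕ → Set ℝ)
    (hmeas : ∀ i ∈ Finset.Icc 1 (n1 + n2), MeasurableSet (X i))
    (hsub : ∀ i ∈ Finset.Icc 1 (n1 + n2), X i ⊆ Set.Ico 0 1)
    (hvol : ∀ i ∈ Finset.Icc 1 (n1 + n2), (volume (X i)).toReal = x i)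
    (hXV2 : ∀ j ∈ Finset.Icc (n1 + 1) (n1 + n2), X j = Set.Ico 0 (x j))
    (S : Finset ℕ) (hS : S ⊆ Finset.Icc (n1 + 1) (n1 + n2)) (hScard : S.card ≤ n1 - 1)
    (α : ℕ) (hα : α ≤ n1 - 1)
    (ha : ∀ i ∈ Finset.Icc 1 n1, ∀ j ∈ Finset.Icc (n1 + 1) (n1 + n2) \ S,
      (volume (X i ∩ X j)).toReal = max 0 (x i + x j - 1))
    (hb : ∀ t ∈ Set.Ico (0 : ℝ) 1,
      ((Finset.Icc 1 n1 ∪ S).filter (fun i => t ∈ X i)).card = α ∨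
        ((Finset.Icc 1 n1 ∪ S).filter (fun i => t ∈ X i)).card = α + 1) :
    ∀ y : ℕ → ℕ → ℝ, memPSplit n1 n2 x y →
      ∑ i ∈ Finset.Icc 1 n1, ∑ j ∈ Finset.Icc (i + 1) (n1 + n2),
          (volume (X i ∩ X j)).toReal
        ≤ edgeSumSplit n1 n2 y := by
  intro y hy
  obtain ⟨hx01, hmc, hlb, hcl⟩ := hy
  have hWsub : ∀ i ∈ Finset.Icc 1 n1 ∪ S, i ∈ Finset.Icc 1 (n1 + n2) := by
    intro i hi
    rcases Finset.mem_union.mp hi with h | h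
    · have := Finset.mem_Icc.mp h
      rw [Finset.mem_Icc]
      omega
    · have := Finset.mem_Icc.mp (hS h)
      rw [Finset.mem_Icc]
      omega
  have Akey := key_identity (Finset.Icc 1 n1 ∪ S) X
    (fun i hi => hmeas i (hWsub i hi)) (fun i hi => hsub i (hWsub i hi)) α hb
  have hxsum : ∑ i ∈ Finset.Icc 1 n1 ∪ S, (volume (X i)).toReal
      = ∑ i ∈ Finset.Icc 1 n1 ∪ S, x i :=
    Finset.sum_congr rfl fun i hi => hvol i (hWsub i hi)
  rw [hxsum] at Akey
  have hAy : ∑ i ∈ Finset.Icc 1 n1 ∪ S,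
        ∑ j ∈ (Finset.Icc 1 n1 ∪ S).filter (fun j => i < j), (volume (X i ∩ X j)).toReal
      ≤ ∑ i ∈ Finset.Icc 1 n1 ∪ S,
        ∑ j ∈ (Finset.Icc 1 n1 ∪ S).filter (fun j => i < j), y i j := by
    rcases Nat.eq_zero_or_pos α with rfl | hα1
    · rw [Akey]
      simp only [Nat.cast_zero, zero_mul, zero_add, zero_sub, zero_div, neg_zero]
      norm_num
      refine Finset.sum_nonneg fun i hi => Finset.sum_nonneg fun j hj => ?_
      have hj' := Finset.mem_filter.mp hj
      exact (hmc i (hWsub i hi) j (hWsub j hj'.1) hj'.2).1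
    · rw [Akey]
      exact hcl S hS hScard α hα1 hα
  have dμ := decompE n1 n2 S hS (fun i j => (volume (X i ∩ X j)).toReal)
  have dy := decompE n1 n2 S hS y
  have wμ := decompW n1 n2 S hS (fun i j => (volume (X i ∩ X j)).toReal)
  have wy := decompW n1 n2 S hS y
  rw [wμ, wy] at hAy
  have h3 : ∑ i ∈ Finset.Icc 1 n1, ∑ j ∈ Finset.Icc (n1+1) (n1+n2) \ S,
        (volume (X i ∩ X j)).toReal
      ≤ ∑ i ∈ Finset.Icc 1 n1, ∑ j ∈ Finset.Icc (n1+1) (n1+n2) \ S, y i j := by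
    refine Finset.sum_le_sum fun i hi => Finset.sum_le_sum fun j hj => ?_
    have hj1 : j ∈ Finset.Icc (n1+1) (n1+n2) := (Finset.mem_sdiff.mp hj).1
    have hi' := Finset.mem_Icc.mp hi
    have hj' := Finset.mem_Icc.mp hj1
    have hiN : i ∈ Finset.Icc 1 (n1+n2) := by rw [Finset.mem_Icc]; omega
    have hjN : j ∈ Finset.Icc 1 (n1+n2) := by rw [Finset.mem_Icc]; omega
    have hij : i < j := by omega
    rw [ha i hi j hj]
    exact max_le (hmc i hiN j hjN hij).1 (hlb i hi j hj1)
  have h4 : ∑ i ∈ S, ∑ j ∈ S.filter (fun j => i < j), y i j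
      ≤ ∑ i ∈ S, ∑ j ∈ S.filter (fun j => i < j), (volume (X i ∩ X j)).toReal := by
    refine Finset.sum_le_sum fun i hi => Finset.sum_le_sum fun j hj => ?_
    obtain ⟨hjS, hij⟩ := Finset.mem_filter.mp hj
    have hiI := hS hi
    have hjI := hS hjS
    have hi'' := Finset.mem_Icc.mp hiI
    have hj'' := Finset.mem_Icc.mp hjI
    have hiN : i ∈ Finset.Icc 1 (n1+n2) := by rw [Finset.mem_Icc]; omega
    have hjN : j ∈ Finset.Icc 1 (n1+n2) := by rw [Finset.mem_Icc]; omega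
    have hxi : 0 ≤ x i := (hx i hiN).1
    have hxj : 0 ≤ x j := (hx j hjN).1
    have : (volume (X i ∩ X j)).toReal = min (x i) (x j) := by
      rw [hXV2 i hiI, hXV2 j hjI, Set.Ico_inter_Ico, max_self, Real.volume_Ico, sub_zero,
        ENNReal.toReal_ofReal (le_min hxi hxj)]
    rw [this]
    exact (hmc i hiN j hjN hij).2
  rw [dμ]
  rw [edgeSumSplit, dy]
  linarith
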